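/- Let d ≥ 1 and let 0 < p ≤ r ≤ q ≤ ∞. Suppose that (i) ‖P₊g‖_{L^r(𝕋)} ≤ ‖g‖_{L^q(𝕋)} for every trigonometric polynomial g on 𝕋, and (ii) ‖P₊h‖_{L^p(𝕋^d)} ≤ ‖h‖_{L^r(𝕋^d)} for every trigonometric polynomial h on 𝕋^d. Then ‖P₊ψ‖_{L^p(𝕋^{d+1})} ≤ ‖ψ‖_{L^q(𝕋^{d+1})} for every trigonometric polynomial ψ on 𝕋^{d+1}. (This yields the critical exponent inequality 𝔭_{d+1}(q) ≥ 𝔭_d(𝔭₁(q)).) -/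

import Mathlib

open MeasureTheory Real Complex AddCircle
open scoped ENNReal

noncomputable section

instance : Fact (0 < 2 * Real.pi) := ⟨by positivity⟩

/-- The `d`-torus `𝕋^d`. -/
abbrev Td (d : ℕ) := Fin d → AddCircle (2 * Real.pi)

/-- Normalized Haar (Lebesgue) measure on the `d`-torus. -/
def muTd (d : ℕ) : Measure (Td d) :=
  Measure.pi fun _ => (haarAddCircle : Measure (AddCircle (2 * Real.pi)))

/-- The trigonometric polynomial on `𝕋^d` with (finitely supported) coefficients `c`,
namely `x ↦ ∑_α c(α) e^{i(α₁θ₁ + ⋯ + α_dθ_d)}`. -/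
def trigPoly {d : ℕ} (c : (Fin d → ℤ) →₀ ℂ) : Td d → ℂ := fun x =>
  ∑ α ∈ c.support, c α * ∏ i, fourier (α i) (x i)

/-- The Riesz projection on coefficients: keep only the multi-indices all of whose
components are nonnegative. -/
def rieszCoeff {d : ℕ} (c : (Fin d → ℤ) →₀ ℂ) : (Fin d → ℤ) →₀ ℂ :=
  c.filter fun α => ∀ i, 0 ≤ α i

/-! ### Auxiliary material -/

namespace RieszAux

abbrev E := AddCircle (2 * Real.pi)

instance (d : ℕ) : IsProbabilityMeasure (muTd d) := by
  unfold muTd; infer_instance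

/-- Jensen: for a probability measure and `0 < s ≤ 1`, `∫ h^s ≤ (∫ h)^s`. -/
lemma lintegral_rpow_le_rpow_lintegral {α : Type*} [MeasurableSpace α] (μ : Measure α)
    [IsProbabilityMeasure μ] {h : α → ℝ≥0∞} (hm : Measurable h) {s : ℝ}
    (hs0 : 0 < s) (hs1 : s ≤ 1) :
    ∫⁻ a, h a ^ s ∂μ ≤ (∫⁻ a, h a ∂μ) ^ s := by
  rcases eq_or_lt_of_le hs1 with rfl | hs
  · simp
  · have hpq : Real.HolderConjugate (1 / s) (1 / (1 - s)) := by
      have h1s : 0 < 1 - s := by linarith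
      constructor
      · simp only [one_div, inv_inv, inv_one]; ring
      · positivity
      · positivity
    have key := ENNReal.lintegral_mul_le_Lp_mul_Lq μ hpq
      (f := fun a => h a ^ s) (g := fun _ => 1)
      ((hm.pow_const s).aemeasurable) aemeasurable_const
    simp only [Pi.mul_apply, mul_one, ENNReal.one_rpow, lintegral_one, measure_univ,
      one_div_one_div, ← ENNReal.rpow_mul, mul_one_div_cancel hs0.ne',
      ENNReal.rpow_one] at key
    exact key

/-- Mixed-norm step, slicing in the first coordinate. -/
lemma mix {α β : Type*} [MeasurableSpace α] [MeasurableSpace β]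
    (μ : Measure α) (ν : Measure β) [IsProbabilityMeasure μ] [IsProbabilityMeasure ν]
    {p r : ℝ≥0∞} (hp : 0 < p) (hpr : p ≤ r)
    {F G : α × β → ℂ} (hF : Measurable F) (hG : Measurable G)
    (h : ∀ a, eLpNorm (fun b => G (a, b)) p ν ≤ eLpNorm (fun b => F (a, b)) r ν) :
    eLpNorm G p (μ.prod ν) ≤ eLpNorm F r (μ.prod ν) := by
  have hr : 0 < r := lt_of_lt_of_le hp hpr
  by_cases hptop : p = ∞
  · -- then r = ∞ as well
    have hrtop : r = ∞ := top_le_iff.mp (hptop ▸ hpr)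
    subst hptop; subst hrtop
    rw [eLpNorm_exponent_top] at *
    set M := eLpNormEssSup F (μ.prod ν) with hM
    have hFM : ∀ᵐ z ∂(μ.prod ν), (‖F z‖₊ : ℝ≥0∞) ≤ M := ae_le_eLpNormEssSup
    have h2 : ∀ᵐ a ∂μ, ∀ᵐ b ∂ν, (‖F (a, b)‖₊ : ℝ≥0∞) ≤ M :=
      Measure.ae_ae_of_ae_prod hFM
    have h3 : ∀ᵐ a ∂μ, ∀ᵐ b ∂ν, (‖G (a, b)‖₊ : ℝ≥0∞) ≤ M := by
      filter_upwards [h2] with a ha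
      have hFa : eLpNormEssSup (fun b => F (a, b)) ν ≤ M := essSup_le_of_ae_le _ ha
      have hGa : eLpNormEssSup (fun b => G (a, b)) ν ≤ M := by
        have := h a
        rw [eLpNorm_exponent_top, eLpNorm_exponent_top] at this
        exact this.trans hFa
      filter_upwards [ae_le_eLpNormEssSup (f := fun b => G (a, b)) (μ := ν)] with b hb
      exact hb.trans hGa
    have hset : MeasurableSet {z : α × β | (‖G z‖₊ : ℝ≥0∞) ≤ M} :=
      measurableSet_le hG.enorm measurable_const
    have h4 : ∀ᵐ z ∂(μ.prod ν), (‖G z‖₊ : ℝ≥0∞) ≤ M :=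
      (Measure.ae_prod_iff_ae_ae hset).mpr h3
    exact essSup_le_of_ae_le _ h4
  · -- p finite
    have hp0 : p ≠ 0 := hp.ne'
    set pR := p.toReal with hpR
    have hpRpos : 0 < pR := ENNReal.toReal_pos hp0 hptop
    rw [eLpNorm_eq_lintegral_rpow_enorm_toReal hp0 hptop]
    have hGm : Measurable fun z : α × β => (‖G z‖₊ : ℝ≥0∞) ^ pR :=
      hG.enorm.pow_const pR
    have key : ∫⁻ z, (‖G z‖₊ : ℝ≥0∞) ^ pR ∂(μ.prod ν) ≤ (eLpNorm F r (μ.prod ν)) ^ pR := by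
      rw [lintegral_prod _ hGm.aemeasurable]
      have slice : ∀ a, ∫⁻ b, (‖G (a, b)‖₊ : ℝ≥0∞) ^ pR ∂ν
          = (eLpNorm (fun b => G (a, b)) p ν) ^ pR := by
        intro a
        rw [eLpNorm_eq_lintegral_rpow_enorm_toReal hp0 hptop, ← ENNReal.rpow_mul,
          one_div, inv_mul_cancel₀ hpRpos.ne', ENNReal.rpow_one]
        rfl
      calc ∫⁻ a, ∫⁻ b, (‖G (a, b)‖₊ : ℝ≥0∞) ^ pR ∂ν ∂μ
          ≤ ∫⁻ a, (eLpNorm (fun b => F (a, b)) r ν) ^ pR ∂μ := by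
            refine lintegral_mono fun a => ?_
            rw [slice a]
            exact ENNReal.rpow_le_rpow (h a) hpRpos.le
        _ ≤ (eLpNorm F r (μ.prod ν)) ^ pR := by
            by_cases hrtop : r = ∞
            · subst hrtop
              rw [eLpNorm_exponent_top]
              set M := eLpNormEssSup F (μ.prod ν) with hM
              have h2 : ∀ᵐ a ∂μ, ∀ᵐ b ∂ν, (‖F (a, b)‖₊ : ℝ≥0∞) ≤ M :=
                Measure.ae_ae_of_ae_prod ae_le_eLpNormEssSup
              have h3 : ∀ᵐ a ∂μ, (eLpNorm (fun b => F (a, b)) ∞ ν) ^ pR ≤ M ^ pR := by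
                filter_upwards [h2] with a ha
                refine ENNReal.rpow_le_rpow ?_ hpRpos.le
                rw [eLpNorm_exponent_top]
                exact essSup_le_of_ae_le _ ha
              calc ∫⁻ a, (eLpNorm (fun b => F (a, b)) ∞ ν) ^ pR ∂μ
                  ≤ ∫⁻ _, M ^ pR ∂μ := lintegral_mono_ae h3
                _ = M ^ pR := by simp
            · -- r finite
              have hr0 : r ≠ 0 := hr.ne'
              set rR := r.toReal with hrR
              have hrRpos : 0 < rR := ENNReal.toReal_pos hr0 hrtop
              have hpRrR : pR ≤ rR := ENNReal.toReal_mono hrtop hpr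
              set H : α → ℝ≥0∞ := fun a => ∫⁻ b, (‖F (a, b)‖₊ : ℝ≥0∞) ^ rR ∂ν with hH
              have hHm : Measurable H := (hF.enorm.pow_const rR).lintegral_prod_right'
              have hS : ∀ a, (eLpNorm (fun b => F (a, b)) r ν) ^ pR = H a ^ (pR / rR) := by
                intro a
                rw [eLpNorm_eq_lintegral_rpow_enorm_toReal hr0 hrtop, ← ENNReal.rpow_mul]
                congr 1
                field_simp
                exact div_self hrRpos.ne'
              have hs0 : 0 < pR / rR := div_pos hpRpos hrRpos
              have hs1 : pR / rR ≤ 1 := (div_le_one hrRpos).mpr hpRrR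
              calc ∫⁻ a, (eLpNorm (fun b => F (a, b)) r ν) ^ pR ∂μ
                  = ∫⁻ a, H a ^ (pR / rR) ∂μ := lintegral_congr hS
                _ ≤ (∫⁻ a, H a ∂μ) ^ (pR / rR) :=
                    lintegral_rpow_le_rpow_lintegral μ hHm hs0 hs1
                _ = (eLpNorm F r (μ.prod ν)) ^ pR := by
                    rw [eLpNorm_eq_lintegral_rpow_enorm_toReal hr0 hrtop, ← ENNReal.rpow_mul,
                      lintegral_prod _ (hF.enorm.pow_const rR).aemeasurable]
                    congr 1
                    field_simp
                    exact (div_self hrRpos.ne').symm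
    calc (∫⁻ z, (‖G z‖₊ : ℝ≥0∞) ^ pR ∂(μ.prod ν)) ^ (1 / pR)
        ≤ ((eLpNorm F r (μ.prod ν)) ^ pR) ^ (1 / pR) :=
          ENNReal.rpow_le_rpow key (by positivity)
      _ = eLpNorm F r (μ.prod ν) := by
          rw [← ENNReal.rpow_mul, mul_one_div_cancel hpRpos.ne', ENNReal.rpow_one]

/-- `mix2` replacement -/
lemma mix2' {α β : Type*} [MeasurableSpace α] [MeasurableSpace β]
    (μ : Measure α) (ν : Measure β) [IsProbabilityMeasure μ] [IsProbabilityMeasure ν]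
    {p r : ℝ≥0∞} (hp : 0 < p) (hpr : p ≤ r)
    {F G : α × β → ℂ} (hF : Measurable F) (hG : Measurable G)
    (h : ∀ b, eLpNorm (fun a => G (a, b)) p μ ≤ eLpNorm (fun a => F (a, b)) r μ) :
    eLpNorm G p (μ.prod ν) ≤ eLpNorm F r (μ.prod ν) := by
  have hswap : MeasurePreserving Prod.swap (ν.prod μ) (μ.prod ν) :=
    Measure.measurePreserving_swap
  rw [← eLpNorm_comp_measurePreserving hG.aestronglyMeasurable hswap,
      ← eLpNorm_comp_measurePreserving hF.aestronglyMeasurable hswap]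
  exact mix ν μ hp hpr (hF.comp measurable_swap) (hG.comp measurable_swap) h

/-! ### Trigonometric polynomial combinatorics -/

lemma trigPoly_eq_sum_subset {d : ℕ} (c : (Fin d → ℤ) →₀ ℂ) {S : Finset (Fin d → ℤ)}
    (hS : c.support ⊆ S) (x : Td d) :
    trigPoly c x = ∑ α ∈ S, c α * ∏ i, fourier (α i) (x i) :=
  Finset.sum_subset hS fun α _ hα => by
    rw [Finsupp.notMem_support_iff.mp hα, zero_mul]

lemma continuous_trigPoly {d : ℕ} (c : (Fin d → ℤ) →₀ ℂ) : Continuous (trigPoly c) :=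
  continuous_finset_sum _ fun α _ =>
    continuous_const.mul <| continuous_finset_prod _ fun i _ =>
      (map_continuous (fourier (α i))).comp (continuous_apply i)

/-- Slice in the first variable: coefficients of `y ↦ ψ(t, y)`. -/
def sliceC {d : ℕ} (c : (Fin (d+1) → ℤ) →₀ ℂ) (t : E) : (Fin d → ℤ) →₀ ℂ :=
  Finsupp.onFinset (c.support.image Fin.tail)
    (fun β => ∑ α ∈ c.support.filter (fun α => Fin.tail α = β), c α * fourier (α 0) t)
    (by
      intro β hβ
      by_contra hmem
      apply hβ
      show ∑ α ∈ c.support.filter (fun α => Fin.tail α = β), c α * fourier (α 0) t = 0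
      rw [Finset.filter_false_of_mem, Finset.sum_empty]
      intro α hα htail
      exact hmem (htail ▸ Finset.mem_image_of_mem Fin.tail hα))

lemma sliceC_apply_superset {d : ℕ} (c : (Fin (d+1) → ℤ) →₀ ℂ) (t : E)
    {T : Finset (Fin (d+1) → ℤ)} (hT : c.support ⊆ T) (β : Fin d → ℤ) :
    sliceC c t β = ∑ α ∈ T.filter (fun α => Fin.tail α = β), c α * fourier (α 0) t := by
  rw [sliceC, Finsupp.onFinset_apply]
  refine Finset.sum_subset (Finset.filter_subset_filter _ hT) (fun α hmem hnot => ?_)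
  have hns : α ∉ c.support := fun hc =>
    hnot (Finset.mem_filter.mpr ⟨hc, (Finset.mem_filter.mp hmem).2⟩)
  rw [Finsupp.notMem_support_iff.mp hns, zero_mul]

lemma trigPoly_slice {d : ℕ} (c : (Fin (d+1) → ℤ) →₀ ℂ) (t : E) (y : Td d) :
    trigPoly (sliceC c t) y = trigPoly c (Fin.cons t y) := by
  rw [trigPoly_eq_sum_subset (sliceC c t) (Finsupp.support_onFinset_subset) y]
  rw [show trigPoly c (Fin.cons t y)
      = ∑ α ∈ c.support, c α * (fourier (α 0) t * ∏ i : Fin d, fourier (α i.succ) (y i)) by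
    refine Finset.sum_congr rfl fun α _ => ?_
    congr 1
    rw [Fin.prod_univ_succ]
    simp [Fin.cons_zero, Fin.cons_succ]]
  refine Finset.sum_image' _ fun α hα => ?_
  rw [sliceC_apply_superset c t (Finset.Subset.refl _) (Fin.tail α), Finset.sum_mul]
  refine Finset.sum_congr rfl fun α' hα' => ?_
  have htail : Fin.tail α' = Fin.tail α := (Finset.mem_filter.mp hα').2
  have hprod : ∏ i : Fin d, fourier (Fin.tail α i) (y i)
      = ∏ i : Fin d, fourier (α' i.succ) (y i) := by
    refine Finset.prod_congr rfl fun i _ => ?_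
    rw [← htail]
    rfl
  rw [hprod]
  ring

lemma forall_succ_iff {d : ℕ} (P : Fin (d+1) → Prop) :
    (∀ i, P i) ↔ P 0 ∧ ∀ j : Fin d, P j.succ :=
  ⟨fun h => ⟨h 0, fun j => h j.succ⟩, fun ⟨h0, h⟩ i => Fin.cases h0 h i⟩

lemma rieszCoeff_apply_pos {d : ℕ} (c : (Fin d → ℤ) →₀ ℂ) {α : Fin d → ℤ}
    (h : ∀ i, 0 ≤ α i) : rieszCoeff c α = c α := by
  classical
  rw [rieszCoeff]
  exact Finsupp.filter_apply_pos _ _ h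

lemma rieszCoeff_apply_neg {d : ℕ} (c : (Fin d → ℤ) →₀ ℂ) {α : Fin d → ℤ}
    (h : ¬ ∀ i, 0 ≤ α i) : rieszCoeff c α = 0 := by
  classical
  rw [rieszCoeff]
  exact Finsupp.filter_apply_neg _ _ h

lemma rieszCoeff_support_subset {d : ℕ} (c : (Fin d → ℤ) →₀ ℂ) :
    (rieszCoeff c).support ⊆ c.support := by
  classical
  rw [rieszCoeff, Finsupp.support_filter]
  exact Finset.filter_subset _ _

lemma filter0_support_subset {d : ℕ} (c : (Fin (d+1) → ℤ) →₀ ℂ) :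
    (c.filter fun α => 0 ≤ α 0).support ⊆ c.support := by
  classical
  rw [Finsupp.support_filter]
  exact Finset.filter_subset _ _

lemma sliceC_riesz {d : ℕ} (c : (Fin (d+1) → ℤ) →₀ ℂ) (t : E) :
    sliceC (rieszCoeff c) t = rieszCoeff (sliceC (c.filter fun α => 0 ≤ α 0) t) := by
  classical
  ext β
  rw [sliceC_apply_superset (rieszCoeff c) t (rieszCoeff_support_subset c) β]
  by_cases hβ : ∀ i, 0 ≤ β i
  · rw [rieszCoeff_apply_pos _ hβ,
      sliceC_apply_superset _ t (filter0_support_subset c) β]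
    refine Finset.sum_congr rfl fun α hα => ?_
    have htail : Fin.tail α = β := (Finset.mem_filter.mp hα).2
    have hiff : (∀ i, 0 ≤ α i) ↔ 0 ≤ α 0 := by
      rw [forall_succ_iff]
      refine ⟨fun h => h.1, fun h0 => ⟨h0, fun j => ?_⟩⟩
      have hj : α j.succ = β j := congrFun htail j
      rw [hj]; exact hβ j
    by_cases h0 : 0 ≤ α 0
    · rw [rieszCoeff_apply_pos _ (hiff.mpr h0),
        Finsupp.filter_apply_pos (fun α => 0 ≤ α 0) c h0]
    · rw [rieszCoeff_apply_neg _ (fun h => h0 (hiff.mp h)),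
        Finsupp.filter_apply_neg (fun α => 0 ≤ α 0) c h0]
  · rw [rieszCoeff_apply_neg _ hβ]
    refine Finset.sum_eq_zero fun α hα => ?_
    have htail : Fin.tail α = β := (Finset.mem_filter.mp hα).2
    have hno : ¬ ∀ i, 0 ≤ α i := fun h => hβ fun j => by
      have hj : α j.succ = β j := congrFun htail j
      rw [← hj]; exact h j.succ
    rw [rieszCoeff_apply_neg _ hno, zero_mul]

/-- Slice in the remaining variables: coefficients of `t ↦ ψ(t, y)` as a 1-variable polynomial. -/
def cyC {d : ℕ} (c : (Fin (d+1) → ℤ) →₀ ℂ) (y : Td d) : (Fin 1 → ℤ) →₀ ℂ :=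
  Finsupp.onFinset (c.support.image (fun α => (fun _ : Fin 1 => α 0)))
    (fun k => ∑ α ∈ c.support.filter (fun α => (fun _ : Fin 1 => α 0) = k),
      c α * ∏ i : Fin d, fourier (α i.succ) (y i))
    (by
      intro k hk
      by_contra hmem
      apply hk
      show ∑ α ∈ c.support.filter (fun α => (fun _ : Fin 1 => α 0) = k),
          c α * ∏ i : Fin d, fourier (α i.succ) (y i) = 0
      rw [Finset.filter_false_of_mem, Finset.sum_empty]
      intro α hα heq
      exact hmem (heq ▸ Finset.mem_image_of_mem _ hα))

lemma cyC_apply_superset {d : ℕ} (c : (Fin (d+1) → ℤ) →₀ ℂ) (y : Td d)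
    {T : Finset (Fin (d+1) → ℤ)} (hT : c.support ⊆ T) (k : Fin 1 → ℤ) :
    cyC c y k = ∑ α ∈ T.filter (fun α => (fun _ : Fin 1 => α 0) = k),
      c α * ∏ i : Fin d, fourier (α i.succ) (y i) := by
  rw [cyC, Finsupp.onFinset_apply]
  refine Finset.sum_subset (Finset.filter_subset_filter _ hT) (fun α hmem hnot => ?_)
  have hns : α ∉ c.support := fun hc =>
    hnot (Finset.mem_filter.mpr ⟨hc, (Finset.mem_filter.mp hmem).2⟩)
  rw [Finsupp.notMem_support_iff.mp hns, zero_mul]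

lemma trigPoly_cy {d : ℕ} (c : (Fin (d+1) → ℤ) →₀ ℂ) (y : Td d) (t : E) :
    trigPoly (cyC c y) (fun _ => t) = trigPoly c (Fin.cons t y) := by
  rw [trigPoly_eq_sum_subset (cyC c y) (Finsupp.support_onFinset_subset) (fun _ => t)]
  rw [show trigPoly c (Fin.cons t y)
      = ∑ α ∈ c.support, c α * (fourier (α 0) t * ∏ i : Fin d, fourier (α i.succ) (y i)) by
    refine Finset.sum_congr rfl fun α _ => ?_
    congr 1
    rw [Fin.prod_univ_succ]
    simp [Fin.cons_zero, Fin.cons_succ]]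
  refine Finset.sum_image' _ fun α hα => ?_
  rw [cyC_apply_superset c y (Finset.Subset.refl _) (fun _ : Fin 1 => α 0), Finset.sum_mul]
  refine Finset.sum_congr rfl fun α' hα' => ?_
  have heq : (fun _ : Fin 1 => α' 0) = (fun _ : Fin 1 => α 0) := (Finset.mem_filter.mp hα').2
  have h0 : α' 0 = α 0 := congrFun heq 0
  rw [show ∏ i : Fin 1, fourier ((fun _ : Fin 1 => α 0) i) t = fourier (α 0) t by
    rw [Fin.prod_univ_one], ← h0]
  ring

lemma cyC_riesz {d : ℕ} (c : (Fin (d+1) → ℤ) →₀ ℂ) (y : Td d) :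
    rieszCoeff (cyC c y) = cyC (c.filter fun α => 0 ≤ α 0) y := by
  classical
  ext k
  rw [cyC_apply_superset _ y (filter0_support_subset c) k]
  by_cases hk : 0 ≤ k 0
  · rw [rieszCoeff_apply_pos _ (fun i : Fin 1 => by
      have hik : k i = k 0 := congrArg k (Subsingleton.elim i 0)
      rw [hik]; exact hk)]
    rw [cyC_apply_superset c y (Finset.Subset.refl _) k]
    refine Finset.sum_congr rfl fun α hα => ?_
    have heq : (fun _ : Fin 1 => α 0) = k := (Finset.mem_filter.mp hα).2
    have h0 : α 0 = k 0 := congrFun heq 0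
    rw [Finsupp.filter_apply_pos (fun α => 0 ≤ α 0) c (show 0 ≤ α 0 by rw [h0]; exact hk)]
  · rw [rieszCoeff_apply_neg _ (fun h => hk (h 0))]
    refine (Finset.sum_eq_zero fun α hα => ?_).symm
    have heq : (fun _ : Fin 1 => α 0) = k := (Finset.mem_filter.mp hα).2
    have h0 : α 0 = k 0 := congrFun heq 0
    rw [Finsupp.filter_apply_neg (fun α => 0 ≤ α 0) c (show ¬ 0 ≤ α 0 by rw [h0]; exact hk), zero_mul]

/-! ### Measure-theoretic transfer lemmas -/

lemma eLpNorm_circle_td1 (φ : E → ℂ) (hφ : AEStronglyMeasurable φ haarAddCircle) (s : ℝ≥0∞)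
    (g : Td 1 → ℂ) (hg : ∀ x, g x = φ (x 0)) :
    eLpNorm φ s haarAddCircle = eLpNorm g s (muTd 1) := by
  have h : MeasurePreserving (MeasurableEquiv.funUnique (Fin 1) E) (muTd 1) haarAddCircle :=
    measurePreserving_funUnique _ _
  rw [← eLpNorm_comp_measurePreserving hφ h]
  congr 1
  funext x
  rw [hg x]
  show φ (x default) = φ (x 0)
  rw [Subsingleton.elim (default : Fin 1) 0]

lemma eLpNorm_split {d : ℕ} (φ : E × Td d → ℂ)
    (hφ : AEStronglyMeasurable φ (haarAddCircle.prod (muTd d))) (s : ℝ≥0∞)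
    (g : Td (d+1) → ℂ) (hg : ∀ x, g x = φ (x 0, Fin.tail x)) :
    eLpNorm g s (muTd (d+1)) = eLpNorm φ s ((haarAddCircle : Measure E).prod (muTd d)) := by
  have h : MeasurePreserving (MeasurableEquiv.piFinSuccAbove (fun _ : Fin (d+1) => E) 0)
      (muTd (d+1)) ((haarAddCircle : Measure E).prod (muTd d)) :=
    measurePreserving_piFinSuccAbove (fun _ => (haarAddCircle : Measure E)) 0
  rw [← eLpNorm_comp_measurePreserving hφ h]
  congr 1
  funext x
  rw [hg x]
  show φ (x 0, Fin.removeNth 0 x) = φ (x 0, Fin.tail x)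
  rw [Fin.removeNth_zero]

end RieszAux


open RieszAux in
theorem riesz_projection_dimension_induction
    (d : ℕ) (hd : 1 ≤ d) (p r q : ℝ≥0∞) (hp : 0 < p) (hpr : p ≤ r) (hrq : r ≤ q)
    (h1 : ∀ c : (Fin 1 → ℤ) →₀ ℂ,
      eLpNorm (trigPoly (rieszCoeff c)) r (muTd 1) ≤ eLpNorm (trigPoly c) q (muTd 1))
    (hdstep : ∀ c : (Fin d → ℤ) →₀ ℂ,
      eLpNorm (trigPoly (rieszCoeff c)) p (muTd d) ≤ eLpNorm (trigPoly c) r (muTd d)) :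
    ∀ c : (Fin (d+1) → ℤ) →₀ ℂ,
      eLpNorm (trigPoly (rieszCoeff c)) p (muTd (d+1)) ≤ eLpNorm (trigPoly c) q (muTd (d+1)) := by
  classical
  intro c
  have hr : 0 < r := lt_of_lt_of_le hp hpr
  set c0 : (Fin (d+1) → ℤ) →₀ ℂ := c.filter (fun α => 0 ≤ α 0) with hc0
  set F : E × Td d → ℂ := fun z => trigPoly c (Fin.cons z.1 z.2) with hFdef
  set Phi : E × Td d → ℂ := fun z => trigPoly c0 (Fin.cons z.1 z.2) with hPhidef
  set G : E × Td d → ℂ := fun z => trigPoly (rieszCoeff c) (Fin.cons z.1 z.2) with hGdef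
  have contCons : Continuous (fun z : E × Td d => (Fin.cons z.1 z.2 : Td (d+1))) := by
    apply continuous_pi
    intro i
    refine Fin.cases ?_ (fun j => ?_) i
    · simp only [Fin.cons_zero]
      exact continuous_fst
    · simp only [Fin.cons_succ]
      exact (continuous_apply j).comp continuous_snd
  have contF : Continuous F := (continuous_trigPoly c).comp contCons
  have contPhi : Continuous Phi := (continuous_trigPoly c0).comp contCons
  have contG : Continuous G := (continuous_trigPoly (rieszCoeff c)).comp contCons
  have e1 : eLpNorm (trigPoly (rieszCoeff c)) p (muTd (d+1))
      = eLpNorm G p ((haarAddCircle : Measure E).prod (muTd d)) :=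
    eLpNorm_split G contG.aestronglyMeasurable p _ (fun x => by
      show trigPoly (rieszCoeff c) x = trigPoly (rieszCoeff c) (Fin.cons (x 0) (Fin.tail x))
      rw [Fin.cons_self_tail])
  have e2 : eLpNorm (trigPoly c) q (muTd (d+1))
      = eLpNorm F q ((haarAddCircle : Measure E).prod (muTd d)) :=
    eLpNorm_split F contF.aestronglyMeasurable q _ (fun x => by
      show trigPoly c x = trigPoly c (Fin.cons (x 0) (Fin.tail x))
      rw [Fin.cons_self_tail])
  rw [e1, e2]
  calc eLpNorm G p ((haarAddCircle : Measure E).prod (muTd d))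
      ≤ eLpNorm Phi r ((haarAddCircle : Measure E).prod (muTd d)) := by
        refine mix _ _ hp hpr contPhi.measurable contG.measurable (fun t => ?_)
        have hGt : (fun y => G (t, y)) = trigPoly (rieszCoeff (sliceC c0 t)) := by
          funext y
          show trigPoly (rieszCoeff c) (Fin.cons t y) = _
          rw [← trigPoly_slice, sliceC_riesz, ← hc0]
        have hPt : (fun y => Phi (t, y)) = trigPoly (sliceC c0 t) := by
          funext y
          show trigPoly c0 (Fin.cons t y) = _
          rw [← trigPoly_slice]
        rw [hGt, hPt]
        exact hdstep (sliceC c0 t)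
    _ ≤ eLpNorm F q ((haarAddCircle : Measure E).prod (muTd d)) := by
        refine mix2' _ _ hr hrq contF.measurable contPhi.measurable (fun y => ?_)
        have key := h1 (cyC c y)
        have eA : eLpNorm (fun t => Phi (t, y)) r (haarAddCircle : Measure E)
            = eLpNorm (trigPoly (rieszCoeff (cyC c y))) r (muTd 1) := by
          refine eLpNorm_circle_td1 _ ((contPhi.comp (Continuous.prodMk_left y)).aestronglyMeasurable) r _ (fun x => ?_)
          have hx : (fun _ : Fin 1 => x 0) = x := funext fun i => congrArg x (Subsingleton.elim 0 i)
          show trigPoly (rieszCoeff (cyC c y)) x = trigPoly c0 (Fin.cons (x 0) y)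
          rw [← hx, cyC_riesz, ← hc0, trigPoly_cy]
        have eB : eLpNorm (fun t => F (t, y)) q (haarAddCircle : Measure E)
            = eLpNorm (trigPoly (cyC c y)) q (muTd 1) := by
          refine eLpNorm_circle_td1 _ ((contF.comp (Continuous.prodMk_left y)).aestronglyMeasurable) q _ (fun x => ?_)
          have hx : (fun _ : Fin 1 => x 0) = x := funext fun i => congrArg x (Subsingleton.elim 0 i)
          show trigPoly (cyC c y) x = trigPoly c (Fin.cons (x 0) y)
          rw [← hx, trigPoly_cy]
        rw [eA, eB]
        exact key
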